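/- A Fibonacci number F_n is a perfect square (i.e., F_n = m² for some integer m) if and only if F_n ∈ {0, 1, 144}. -/

import Mathlib

open Nat

/-- Lucas numbers. -/
def Ln : ℕ → ℕ
  | 0 => 2
  | 1 => 1
  | n + 2 => Ln (n + 1) + Ln n

lemma Ln_add_two (n : ℕ) : Ln (n + 2) = Ln (n + 1) + Ln n := rfl

lemma Ln_pos (n : ℕ) : 0 < Ln n := by
  induction n using Nat.strong_induction_on with
  | _ n ih =>
    match n with
    | 0 => simp [Ln]
    | 1 => simp [Ln]
    | n + 2 => rw [Ln_add_two]; have := ih n (by omega); omega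

/-- Fibonacci as integers. -/
def Fz (n : ℕ) : ℤ := Nat.fib n

def Lz (n : ℕ) : ℤ := Ln n

lemma Fz_add_two (n : ℕ) : Fz (n + 2) = Fz (n + 1) + Fz n := by
  unfold Fz; rw [Nat.fib_add_two]; push_cast; ring

lemma Lz_add_two (n : ℕ) : Lz (n + 2) = Lz (n + 1) + Lz n := by
  unfold Lz; rw [Ln_add_two]; push_cast; ring

/-- Lucas in terms of fib. -/
lemma Lz_eq (n : ℕ) : Lz n = 2 * Fz (n + 1) - Fz n := by
  induction n using Nat.strong_induction_on with
  | _ n ih =>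
    match n with
    | 0 => simp [Lz, Ln, Fz]
    | 1 => simp [Lz, Ln, Fz]
    | n + 2 =>
      have h1 := ih n (by omega)
      have h2 := ih (n + 1) (by omega)
      rw [Lz_add_two, Fz_add_two, h1, h2, Fz_add_two]
      ring

/-- Cassini's identity. -/
lemma cassini (n : ℕ) : Fz (n+1)^2 - Fz (n+1) * Fz n - Fz n ^ 2 = (-1)^n := by
  induction n with
  | zero => simp [Fz]
  | succ n ih =>
    rw [Fz_add_two, pow_succ]
    linear_combination -ih

lemma fz_two_mul (k : ℕ) : Fz (2 * k) = Fz k * (2 * Fz (k+1) - Fz k) := by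
  unfold Fz
  rw [Nat.fib_two_mul]
  have h : fib k ≤ 2 * fib (k + 1) := le_trans (fib_le_fib_succ) (by omega)
  push_cast [Nat.sub_add_cancel, h]
  ring

lemma fz_two_mul_add_one (k : ℕ) : Fz (2 * k + 1) = Fz (k+1)^2 + Fz k ^2 := by
  unfold Fz
  rw [Nat.fib_two_mul_add_one]
  push_cast; ring


lemma Fz_zero : Fz 0 = 0 := rfl
lemma Fz_one : Fz 1 = 1 := rfl

/-- Addition law for Fibonacci with Lucas modulus. -/
lemma G1 (k : ℕ) : ∀ j, Fz (j + 2*k) = Lz k * Fz (j + k) - (-1)^k * Fz j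
  | 0 => by
    rw [Nat.zero_add, Nat.zero_add, Fz_zero, Lz_eq, fz_two_mul]; ring
  | 1 => by
    rw [show 1 + 2*k = 2*k + 1 from by ring, show 1 + k = k + 1 from by ring,
      Fz_one, Lz_eq, fz_two_mul_add_one]
    linear_combination -cassini k
  | (j+2) => by
    have h1 := G1 k j
    have h2 := G1 k (j+1)
    rw [show j + 2 + 2*k = (j + 2*k) + 2 from by ring, Fz_add_two,
        show j + 2 + k = (j + k) + 2 from by ring, Fz_add_two (j+k), Fz_add_two j,
        show j + 1 + 2*k = (j + 2*k) + 1 from by ring] at *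
    rw [show j + 1 + k = j + k + 1 from by ring] at h2
    linear_combination h1 + h2

lemma Lz_zero : Lz 0 = 2 := rfl
lemma Lz_one : Lz 1 = 1 := rfl

/-- Addition law for Lucas. -/
lemma G2 (k : ℕ) : ∀ j, Lz (j + 2*k) = Lz k * Lz (j + k) - (-1)^k * Lz j
  | 0 => by
    rw [Nat.zero_add, Nat.zero_add, Lz_zero, Lz_eq (2*k),
      show 2*k+1 = 2*k+1 from rfl, fz_two_mul_add_one, fz_two_mul, Lz_eq k]
    linear_combination -2 * cassini k
  | 1 => by
    rw [show 1 + 2*k = 2*k + 1 from by ring, show 1 + k = k + 1 from by ring,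
      Lz_one, Lz_eq (2*k+1), show 2*k+1+1 = 2*(k+1) from by ring,
      fz_two_mul (k+1), fz_two_mul_add_one, Lz_eq k, Lz_eq (k+1), Fz_add_two]
    linear_combination -cassini k
  | (j+2) => by
    have h1 := G2 k j
    have h2 := G2 k (j+1)
    rw [show j + 2 + 2*k = (j + 2*k) + 2 from by ring, Lz_add_two,
        show j + 2 + k = (j + k) + 2 from by ring, Lz_add_two (j+k), Lz_add_two j,
        show j + 1 + 2*k = (j + 2*k) + 1 from by ring] at *
    rw [show j + 1 + k = j + k + 1 from by ring] at h2
    linear_combination h1 + h2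

lemma neg_one_pow_even {k : ℕ} (hk : 2 ∣ k) : (-1 : ℤ)^k = 1 :=
  Even.neg_one_pow (even_iff_two_dvd.2 hk)

lemma stepF {k : ℕ} (hk : 2 ∣ k) (j : ℕ) : Lz k ∣ Fz (j + 2*k) + Fz j := by
  have h := G1 k j
  rw [neg_one_pow_even hk] at h
  exact ⟨Fz (j + k), by linarith⟩

lemma stepL {k : ℕ} (hk : 2 ∣ k) (j : ℕ) : Lz k ∣ Lz (j + 2*k) + Lz j := by
  have h := G2 k j
  rw [neg_one_pow_even hk] at h
  exact ⟨Lz (j + k), by linarith⟩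

lemma iterF {k : ℕ} (hk : 2 ∣ k) (t j : ℕ) : Lz k ∣ Fz (j + 2*k*t) - (-1)^t * Fz j := by
  induction t with
  | zero => simp
  | succ t ih =>
    have h1 := stepF hk (j + 2*k*t)
    have h2 := dvd_sub h1 ih
    rw [show j + 2*k*(t+1) = j + 2*k*t + 2*k from by ring]
    have : Fz (j + 2*k*t + 2*k) - (-1)^(t+1) * Fz j
        = Fz (j + 2*k*t + 2*k) + Fz (j + 2*k*t) - (Fz (j + 2*k*t) - (-1)^t * Fz j) := by
      rw [pow_succ]; ring
    rw [this]
    exact h2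

lemma iterL {k : ℕ} (hk : 2 ∣ k) (t j : ℕ) : Lz k ∣ Lz (j + 2*k*t) - (-1)^t * Lz j := by
  induction t with
  | zero => simp
  | succ t ih =>
    have h1 := stepL hk (j + 2*k*t)
    have h2 := dvd_sub h1 ih
    rw [show j + 2*k*(t+1) = j + 2*k*t + 2*k from by ring]
    have : Lz (j + 2*k*t + 2*k) - (-1)^(t+1) * Lz j
        = Lz (j + 2*k*t + 2*k) + Lz (j + 2*k*t) - (Lz (j + 2*k*t) - (-1)^t * Lz j) := by
      rw [pow_succ]; ring
    rw [this]
    exact h2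

lemma congF_odd {k t : ℕ} (hk : 2 ∣ k) (ht : Odd t) (j : ℕ) :
    Lz k ∣ Fz (j + 2*k*t) + Fz j := by
  have h := iterF hk t j
  rwa [Odd.neg_one_pow ht, neg_one_mul, sub_neg_eq_add] at h

lemma congF_even {k t : ℕ} (hk : 2 ∣ k) (ht : Even t) (j : ℕ) :
    Lz k ∣ Fz (j + 2*k*t) - Fz j := by
  have h := iterF hk t j
  rwa [Even.neg_one_pow ht, one_mul] at h

lemma congL_odd {k t : ℕ} (hk : 2 ∣ k) (ht : Odd t) (j : ℕ) :
    Lz k ∣ Lz (j + 2*k*t) + Lz j := by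
  have h := iterL hk t j
  rwa [Odd.neg_one_pow ht, neg_one_mul, sub_neg_eq_add] at h

lemma congL_even {k t : ℕ} (hk : 2 ∣ k) (ht : Even t) (j : ℕ) :
    Lz k ∣ Lz (j + 2*k*t) - Lz j := by
  have h := iterL hk t j
  rwa [Even.neg_one_pow ht, one_mul] at h

/-- `F (2k+1) = F k * L (k+1) - (-1)^(k+1)`. -/
lemma FB (j : ℕ) : Fz (2*j+1) = Fz j * Lz (j+1) - (-1)^(j+1) := by
  rw [fz_two_mul_add_one, Lz_eq (j+1), Fz_add_two, pow_succ]
  linear_combination cassini j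

/-- Base case: `L k ∣ F (2k-1) + 1` for even `k ≥ 2`. -/
lemma FBdvd {k : ℕ} (hk : 2 ∣ k) (h1 : 1 ≤ k) : Lz k ∣ Fz (2*k - 1) + 1 := by
  obtain ⟨j, rfl⟩ : ∃ j, k = j + 1 := ⟨k - 1, by omega⟩
  have h := FB j
  rw [neg_one_pow_even (by omega : 2 ∣ j + 1)] at h
  rw [show 2*(j+1) - 1 = 2*j+1 from by omega, h]
  exact ⟨Fz j, by ring⟩

/-- Base case: `L k ∣ L (2k-6) + 18` for even `k ≥ 4`. -/
lemma BL6 {k : ℕ} (hk : 2 ∣ k) (h4 : 4 ≤ k) : Lz k ∣ Lz (2*k - 6) + 18 := by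
  rcases eq_or_lt_of_le h4 with h | h
  · subst_vars
    decide
  · obtain ⟨u, rfl⟩ : ∃ u, k = u + 6 := ⟨k - 6, by omega⟩
    have h := G2 u 6
    rw [neg_one_pow_even (by omega : 2 ∣ u)] at h
    rw [show 2*(u+6) - 6 = 6 + 2*u from by omega, h,
        show Lz 6 = 18 from rfl, show 6 + u = u + 6 from by ring]
    exact ⟨Lz u, by ring⟩

lemma LnP8 : ∀ n, Ln (n + 12) % 8 = Ln n % 8
  | 0 => by decide
  | 1 => by decide
  | (n+2) => by
    have h1 := LnP8 n
    have h2 := LnP8 (n+1)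
    have e1 : Ln (n+2+12) = Ln (n+1+12) + Ln (n+12) := by
      rw [show n+2+12 = (n+12)+2 from by omega, Ln_add_two,
          show n+1+12 = (n+12)+1 from by omega]
    have e2 : Ln (n+2) = Ln (n+1) + Ln n := Ln_add_two n
    omega

lemma Ln_mod8 (n : ℕ) : Ln n % 8 = Ln (n % 12) % 8 := by
  induction n using Nat.strong_induction_on with
  | _ n ih =>
    rcases lt_or_ge n 12 with h | h
    · rw [Nat.mod_eq_of_lt h]
    · obtain ⟨m, rfl⟩ : ∃ m, n = m + 12 := ⟨n - 12, by omega⟩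
      rw [LnP8 m, ih m (by omega), Nat.add_mod_right]

lemma LnP3 : ∀ n, Ln (n + 8) % 3 = Ln n % 3
  | 0 => by decide
  | 1 => by decide
  | (n+2) => by
    have h1 := LnP3 n
    have h2 := LnP3 (n+1)
    have e1 : Ln (n+2+8) = Ln (n+1+8) + Ln (n+8) := by
      rw [show n+2+8 = (n+8)+2 from by omega, Ln_add_two,
          show n+1+8 = (n+8)+1 from by omega]
    have e2 : Ln (n+2) = Ln (n+1) + Ln n := Ln_add_two n
    omega

lemma Ln_mod3 (n : ℕ) : Ln n % 3 = Ln (n % 8) % 3 := by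
  induction n using Nat.strong_induction_on with
  | _ n ih =>
    rcases lt_or_ge n 8 with h | h
    · rw [Nat.mod_eq_of_lt h]
    · obtain ⟨m, rfl⟩ : ∃ m, n = m + 8 := ⟨n - 8, by omega⟩
      rw [LnP3 m, ih m (by omega), Nat.add_mod_right]

/-- For even `k` not divisible by 3, `L k ≡ 3 or 7 (mod 8)`. -/
lemma Ln_37 {k : ℕ} (h2 : 2 ∣ k) (h3 : ¬ 3 ∣ k) : Ln k % 8 = 3 ∨ Ln k % 8 = 7 := by
  have h := Ln_mod8 k
  have : k % 12 = 2 ∨ k % 12 = 4 ∨ k % 12 = 8 ∨ k % 12 = 10 := by omega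
  rcases this with h' | h' | h' | h' <;> rw [h'] at h <;> simp [show Ln 2 = 3 from rfl,
    show Ln 4 = 7 from rfl, show Ln 8 = 47 from rfl, show Ln 10 = 123 from rfl] at h <;> omega

/-- For `4 ∣ k`, `3 ∤ k`: `L k ≡ 7 (mod 8)`. -/
lemma Ln_7 {k : ℕ} (h4 : 4 ∣ k) (h3 : ¬ 3 ∣ k) : Ln k % 8 = 7 := by
  have h := Ln_mod8 k
  have : k % 12 = 4 ∨ k % 12 = 8 := by omega
  rcases this with h' | h' <;> rw [h'] at h <;>
    simp [show Ln 4 = 7 from rfl, show Ln 8 = 47 from rfl] at h <;> omega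

/-- For `4 ∣ k`: `3 ∤ L k`. -/
lemma Ln_not3 {k : ℕ} (h4 : 4 ∣ k) : ¬ 3 ∣ Ln k := by
  have h := Ln_mod3 k
  have : k % 8 = 0 ∨ k % 8 = 4 := by omega
  rcases this with h' | h' <;> rw [h'] at h <;>
    simp [show Ln 0 = 2 from rfl, show Ln 4 = 7 from rfl] at h <;> omega

/-- For `3 ∤ k`: `L k` is odd. -/
lemma Ln_odd {k : ℕ} (h3 : ¬ 3 ∣ k) : Ln k % 2 = 1 := by
  have h := Ln_mod8 k
  have : k % 12 = 1 ∨ k % 12 = 2 ∨ k % 12 = 4 ∨ k % 12 = 5 ∨ k % 12 = 7 ∨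
      k % 12 = 8 ∨ k % 12 = 10 ∨ k % 12 = 11 := by omega
  rcases this with h'|h'|h'|h'|h'|h'|h'|h' <;> rw [h'] at h <;>
    simp [show Ln 1 = 1 from rfl, show Ln 2 = 3 from rfl, show Ln 4 = 7 from rfl,
      show Ln 5 = 11 from rfl, show Ln 7 = 29 from rfl, show Ln 8 = 47 from rfl,
      show Ln 10 = 123 from rfl, show Ln 11 = 199 from rfl] at h <;> omega

/-- For odd `m` with `3 ∣ m`: `L m ≡ 4 (mod 8)`. -/
lemma Ln_4mod8 {m : ℕ} (ho : ¬ 2 ∣ m) (h3 : 3 ∣ m) : Ln m % 8 = 4 := by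
  have h := Ln_mod8 m
  have : m % 12 = 3 ∨ m % 12 = 9 := by omega
  rcases this with h' | h' <;> rw [h'] at h <;>
    simp [show Ln 3 = 4 from rfl, show Ln 9 = 76 from rfl] at h <;> omega

/-- For even `m`: `L m ≡ 2, 3 or 7 (mod 8)`. -/
lemma Ln_even_idx {m : ℕ} (he : 2 ∣ m) : Ln m % 8 = 2 ∨ Ln m % 8 = 3 ∨ Ln m % 8 = 7 := by
  have h := Ln_mod8 m
  have : m % 12 = 0 ∨ m % 12 = 2 ∨ m % 12 = 4 ∨ m % 12 = 6 ∨ m % 12 = 8 ∨ m % 12 = 10 := by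
    omega
  rcases this with h'|h'|h'|h'|h'|h' <;> rw [h'] at h <;>
    simp [show Ln 0 = 2 from rfl, show Ln 2 = 3 from rfl, show Ln 4 = 7 from rfl,
      show Ln 6 = 18 from rfl, show Ln 8 = 47 from rfl, show Ln 10 = 123 from rfl] at h <;> omega

lemma sq_mod8 (y : ℕ) : y^2 % 8 = 0 ∨ y^2 % 8 = 1 ∨ y^2 % 8 = 4 := by
  have h := Nat.pow_mod y 2 8
  have h8 : y % 8 < 8 := Nat.mod_lt _ (by norm_num)
  interval_cases h' : y % 8 <;> simp [h'] at h <;> omega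

/-- Decomposition `d = 2kt` with `k` even, `3 ∤ k`, `t` odd. -/
lemma decomp {d : ℕ} (hd : 0 < d) (h4 : 4 ∣ d) :
    ∃ k t, d = 2*k*t ∧ 2 ∣ k ∧ ¬ 3 ∣ k ∧ Odd t ∧ 2 ≤ k ∧ (8 ∣ d → 4 ∣ k) := by
  set s := d.factorization 3 with hs
  set r := d / 3^s with hrdef
  have hmul : 3^s * r = d := Nat.ordProj_mul_ordCompl_eq_self d 3
  have h3r : ¬ 3 ∣ r := Nat.not_dvd_ordCompl (by norm_num) (by omega)
  have hcop : Nat.Coprime 4 (3^s) := Nat.Coprime.pow_right s (by norm_num)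
  have h4r : 4 ∣ r := hcop.dvd_of_dvd_mul_left (by rw [hmul]; exact h4)
  obtain ⟨k, hk⟩ := (by omega : 2 ∣ r)
  refine ⟨k, 3^s, by rw [← hmul, hk]; ring, by omega, ?_, Odd.pow (by decide : Odd 3), by omega, ?_⟩
  · intro h3k; exact h3r (by omega)
  · intro h8
    have hcop8 : Nat.Coprime 8 (3^s) := Nat.Coprime.pow_right s (by norm_num)
    have h8r : 8 ∣ r := hcop8.dvd_of_dvd_mul_left (by rw [hmul]; exact h8)
    omega

lemma prime_3mod4 {N : ℕ} (hN : N % 4 = 3) : ∃ p, p.Prime ∧ p ∣ N ∧ p % 4 = 3 := by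
  revert hN
  induction N using Nat.strong_induction_on with
  | _ N ih =>
    intro hN
    have hN1 : N ≠ 1 := by omega
    have hp := Nat.minFac_prime hN1
    set p := N.minFac with hpdef
    have hdvd : p ∣ N := Nat.minFac_dvd N
    have hpodd : p % 2 = 1 := by
      rcases hp.eq_two_or_odd with h | h
      · exfalso; obtain ⟨c, hc⟩ := hdvd; rw [h] at hc; omega
      · exact h
    rcases (by omega : p % 4 = 1 ∨ p % 4 = 3) with h1 | h3
    · obtain ⟨M, hM⟩ := hdvd
      have hM4 : M % 4 = 3 := by
        have := Nat.mul_mod p M 4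
        rw [← hM, h1, hN] at this
        omega
      have hMlt : M < N := by
        have hp2 : 2 ≤ p := hp.two_le
        nlinarith [Nat.one_le_iff_ne_zero.2 (show M ≠ 0 from by rintro rfl; omega)]
      obtain ⟨q, hq1, hq2, hq3⟩ := ih M hMlt hM4
      exact ⟨q, hq1, hq2.trans ⟨p, by rw [hM]; ring⟩, hq3⟩
    · exact ⟨p, hp, hdvd, h3⟩

/-- If `N ≡ 3 (mod 4)` and `gcd c N = 1` then `N ∤ x² + c²`. -/
lemma no_sq_neg {N c : ℕ} (hN : N % 4 = 3) (hc : Nat.Coprime c N) (x : ℤ) :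
    ¬ ((N : ℤ) ∣ x^2 + (c:ℤ)^2) := by
  intro hdvd
  obtain ⟨p, hp, hpN, hp4⟩ := prime_3mod4 hN
  haveI : Fact p.Prime := ⟨hp⟩
  have hpd : (p : ℤ) ∣ x^2 + (c:ℤ)^2 := dvd_trans (Int.natCast_dvd_natCast.2 hpN) hdvd
  have hzero : ((x^2 + (c:ℤ)^2 : ℤ) : ZMod p) = 0 := by
    rwa [ZMod.intCast_zmod_eq_zero_iff_dvd]
  push_cast at hzero
  have hcne : (c : ZMod p) ≠ 0 := by
    intro h0
    have h1 : p ∣ c := (ZMod.natCast_eq_zero_iff c p).1 h0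
    have h2 : p ∣ Nat.gcd c N := Nat.dvd_gcd h1 hpN
    rw [hc] at h2
    exact hp.one_lt.ne' (Nat.dvd_one.1 h2)
  have hsq : IsSquare (-1 : ZMod p) := by
    refine ⟨(x : ZMod p) * (c : ZMod p)⁻¹, ?_⟩
    have hx2 : (x : ZMod p)^2 = -(c:ZMod p)^2 := by linear_combination hzero
    have hcu : (c : ZMod p) * (c : ZMod p)⁻¹ = 1 := ZMod.mul_inv_of_unit _ (Ne.isUnit hcne)
    field_simp
    linear_combination -hx2
  exact ZMod.exists_sq_eq_neg_one_iff.1 hsq hp4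

lemma Ln_add_fib (m : ℕ) : Ln m + fib m = 2 * fib (m + 1) := by
  induction m using Nat.strong_induction_on with
  | _ m ih =>
    match m with
    | 0 => decide
    | 1 => decide
    | (m+2) =>
      have h1 := ih m (by omega)
      have h2 := ih (m+1) (by omega)
      have e1 := Ln_add_two m
      have e2 := Nat.fib_add_two (n := m)
      have e3 := Nat.fib_add_two (n := m+1)
      simp only [show m+1+1 = m+2 from rfl, show m+1+2 = m+3 from rfl,
        show m+2+1 = m+3 from rfl] at *
      omega

lemma fib_two_mul_Ln (m : ℕ) : fib (2 * m) = fib m * Ln m := by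
  rw [Nat.fib_two_mul]
  have h := Ln_add_fib m
  have : 2 * fib (m+1) - fib m = Ln m := by omega
  rw [this]

lemma gcd_fib_Ln_dvd_two (m : ℕ) : Nat.gcd (fib m) (Ln m) ∣ 2 := by
  set d := Nat.gcd (fib m) (Ln m) with hd
  have h1 : d ∣ fib m := Nat.gcd_dvd_left _ _
  have h2 : d ∣ Ln m := Nat.gcd_dvd_right _ _
  have h3 : d ∣ 2 * fib (m+1) := by
    rw [← Ln_add_fib m]; exact Nat.dvd_add h2 h1
  have hcop : Nat.Coprime d (fib (m+1)) :=
    Nat.Coprime.coprime_dvd_left h1 (Nat.fib_coprime_fib_succ m)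
  exact hcop.dvd_of_dvd_mul_right h3

lemma Ln_even_of_3dvd {m : ℕ} (h3 : 3 ∣ m) : 2 ∣ Ln m := by
  have h := Ln_mod8 m
  have : m % 12 = 0 ∨ m % 12 = 3 ∨ m % 12 = 6 ∨ m % 12 = 9 := by omega
  rcases this with h'|h'|h'|h' <;> rw [h'] at h <;>
    simp [show Ln 0 = 2 from rfl, show Ln 3 = 4 from rfl, show Ln 6 = 18 from rfl,
      show Ln 9 = 76 from rfl] at h <;> omega

lemma cop2 {N : ℕ} (h : N % 2 = 1) : Nat.Coprime 2 N :=
  (Nat.Prime.coprime_iff_not_dvd Nat.prime_two).2 (by omega)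

lemma cop3 {N : ℕ} (h : ¬ 3 ∣ N) : Nat.Coprime 3 N :=
  (Nat.Prime.coprime_iff_not_dvd Nat.prime_three).2 h

/-- Main odd-index lemma: if `fib n` is a square and `n` is odd then `n = 1`. -/
lemma odd_sq_fib {n y : ℕ} (hn : ¬ 2 ∣ n) (hy : fib n = y^2) : n = 1 := by
  by_contra hne
  have hFz : Fz n = (y:ℤ)^2 := by unfold Fz; rw [hy]; push_cast; ring
  have key : ∃ k, 2 ∣ k ∧ ¬ 3 ∣ k ∧ Lz k ∣ (y:ℤ)^2 + 1 := by
    rcases (by omega : n % 4 = 1 ∨ n % 4 = 3) with h1 | h3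
    · -- n ≡ 1 (mod 4), n ≥ 5
      obtain ⟨k, t, hkt, hk2, hk3, ht, hkge, _⟩ :=
        decomp (show 0 < n - 1 by omega) (show 4 ∣ n - 1 by omega)
      have hc := congF_odd hk2 ht 1
      rw [show 1 + 2*k*t = n from by omega, hFz, Fz_one] at hc
      exact ⟨k, hk2, hk3, hc⟩
    · -- n ≡ 3 (mod 4)
      obtain ⟨k, t, hkt, hk2, hk3, ht, hkge, _⟩ :=
        decomp (show 0 < n + 1 by omega) (show 4 ∣ n + 1 by omega)
      obtain ⟨s, rfl⟩ : ∃ s, t = s + 1 := ⟨t - 1, by obtain ⟨w, hw⟩ := ht; omega⟩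
      have hc1 := congF_even hk2 (t := s) (by simpa using (Nat.Odd.sub_odd ht odd_one)) (2*k - 1)
      have hexp : 2*k*(s+1) = 2*k*s + 2*k := by ring
      rw [hexp] at hkt
      rw [show 2*k - 1 + 2*k*s = n from by omega] at hc1
      have hc2 := FBdvd hk2 (by omega)
      have : Lz k ∣ Fz n + 1 := by
        have := dvd_add hc1 hc2
        rwa [show Fz n - Fz (2*k-1) + (Fz (2*k-1) + 1) = Fz n + 1 from by ring] at this
      rw [hFz] at this
      exact ⟨k, hk2, hk3, this⟩
  obtain ⟨k, hk2, hk3, hc⟩ := key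
  rcases Ln_37 hk2 hk3 with h8 | h8 <;>
  exact no_sq_neg (N := Ln k) (c := 1) (by omega) (Nat.coprime_one_left _) (y:ℤ)
    (by push_cast; exact hc) 

/-- Cohn: Lucas number is a square only for `m = 1, 3`. -/
lemma lucas_sq {m b : ℕ} (h : Ln m = b^2) : m = 1 ∨ m = 3 := by
  have hLz : Lz m = (b:ℤ)^2 := by unfold Lz; rw [h]; push_cast; ring
  rcases Nat.even_or_odd m with he | ho
  · exfalso
    rcases Ln_even_idx he.two_dvd with h8 | h8 | h8 <;> rcases sq_mod8 b with hb | hb | hb <;>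
      omega
  · have hm2 : ¬ 2 ∣ m := by rw [Nat.two_dvd_ne_zero, Nat.odd_iff.1 ho]
    rcases (by omega : m % 4 = 1 ∨ m % 4 = 3) with h1 | h3
    · -- m ≡ 1 mod 4
      by_cases hm1 : m = 1
      · exact Or.inl hm1
      exfalso
      obtain ⟨k, t, hkt, hk2, hk3, ht, hkge, _⟩ :=
        decomp (show 0 < m - 1 by omega) (show 4 ∣ m - 1 by omega)
      have hc := congL_odd hk2 ht 1
      rw [show 1 + 2*k*t = m from by omega, hLz, Lz_one] at hc
      rcases Ln_37 hk2 hk3 with h8 | h8 <;>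
      exact no_sq_neg (N := Ln k) (c := 1) (by omega) (Nat.coprime_one_left _) (b:ℤ)
        (by push_cast; exact hc)
    · -- m ≡ 3 mod 4
      by_cases hm3 : m = 3
      · exact Or.inr hm3
      exfalso
      obtain ⟨k, t, hkt, hk2, hk3, ht, hkge, _⟩ :=
        decomp (show 0 < m - 3 by omega) (show 4 ∣ m - 3 by omega)
      have hc := congL_odd hk2 ht 3
      rw [show 3 + 2*k*t = m from by omega, hLz, show Lz 3 = 4 from rfl] at hc
      rcases Ln_37 hk2 hk3 with h8 | h8 <;>
      exact no_sq_neg (N := Ln k) (c := 2) (by omega) (cop2 (Ln_odd hk3)) (b:ℤ)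
        (by push_cast; norm_num; exact hc)

/-- Helper finish: `L k ∣ 2b² + 2` with `k` even, `3 ∤ k` is impossible. -/
lemma fin1 {k b : ℕ} (hk2 : 2 ∣ k) (hk3 : ¬ 3 ∣ k)
    (hdvd : (Ln k : ℤ) ∣ 2*(b:ℤ)^2 + 2) : False := by
  have hnat : Ln k ∣ 2*b^2 + 2 := by
    have : ((2*b^2 + 2 : ℕ) : ℤ) = 2*(b:ℤ)^2 + 2 := by push_cast; ring
    exact_mod_cast this ▸ hdvd
  have hodd := Ln_odd hk3
  have h2 : Ln k ∣ (b^2 + 1) * 2 := by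
    rw [show (b^2+1)*2 = 2*b^2+2 from by ring]; exact hnat
  have h3 : Ln k ∣ b^2 + 1 := (cop2 hodd).symm.dvd_of_dvd_mul_right h2
  rcases Ln_37 hk2 hk3 with h8 | h8 <;>
  exact no_sq_neg (N := Ln k) (c := 1) (by omega) (Nat.coprime_one_left _) (b:ℤ)
    (by push_cast; exact_mod_cast Int.natCast_dvd_natCast.2 h3)

/-- Helper finish: `L k ∣ 2b² + 18` with `4 ∣ k`, `3 ∤ k` is impossible. -/
lemma fin9 {k b : ℕ} (hk4 : 4 ∣ k) (hk3 : ¬ 3 ∣ k)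
    (hdvd : (Ln k : ℤ) ∣ 2*(b:ℤ)^2 + 18) : False := by
  have hk2 : 2 ∣ k := by omega
  have hnat : Ln k ∣ 2*b^2 + 18 := by
    have : ((2*b^2 + 18 : ℕ) : ℤ) = 2*(b:ℤ)^2 + 18 := by push_cast; ring
    exact_mod_cast this ▸ hdvd
  have hodd := Ln_odd hk3
  have h2 : Ln k ∣ (b^2 + 9) * 2 := by
    rw [show (b^2+9)*2 = 2*b^2+18 from by ring]; exact hnat
  have h3 : Ln k ∣ b^2 + 9 := (cop2 hodd).symm.dvd_of_dvd_mul_right h2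
  have h8 := Ln_7 hk4 hk3
  exact no_sq_neg (N := Ln k) (c := 3) (by omega) (cop3 (Ln_not3 hk4)) (b:ℤ)
    (by have h5 := Int.natCast_dvd_natCast.2 h3
        push_cast at h5 ⊢
        norm_num
        exact h5)

/-- Cohn: Lucas number is twice a square only for `m = 0, 6`. -/
lemma lucas_two_sq {m b : ℕ} (h : Ln m = 2*b^2) : m = 0 ∨ m = 6 := by
  have hLz : Lz m = 2*(b:ℤ)^2 := by unfold Lz; rw [h]; push_cast; ring
  have h3m : 3 ∣ m := by
    by_contra h3
    have := Ln_odd h3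
    omega
  rcases Nat.even_or_odd m with he | ho
  · -- m even
    have hm2 : 2 ∣ m := he.two_dvd
    by_cases hm0 : m = 0
    · exact Or.inl hm0
    rcases (by omega : m % 4 = 0 ∨ m % 4 = 2) with h4 | h4
    · -- 4 ∣ m, m > 0
      exfalso
      obtain ⟨k, t, hkt, hk2, hk3, ht, hkge, _⟩ :=
        decomp (show 0 < m by omega) (show 4 ∣ m by omega)
      have hc := congL_odd hk2 ht 0
      rw [show 0 + 2*k*t = m from by omega, hLz, Lz_zero] at hc
      exact fin1 hk2 hk3 hc
    · -- m ≡ 2 mod 4, with 3 ∣ m: m ≡ 6 or 18 mod 24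
      have h24 : m % 24 = 6 ∨ m % 24 = 18 := by omega
      rcases h24 with h24 | h24
      · by_cases hm6 : m = 6
        · exact Or.inr hm6
        exfalso
        obtain ⟨k, t, hkt, hk2, hk3, ht, hkge, h8k⟩ :=
          decomp (show 0 < m - 6 by omega) (show 4 ∣ m - 6 by omega)
        have hk4 : 4 ∣ k := h8k (by omega)
        have hc := congL_odd hk2 ht 6
        rw [show 6 + 2*k*t = m from by omega, hLz, show Lz 6 = 18 from rfl] at hc
        exact fin9 hk4 hk3 hc
      · exfalso
        obtain ⟨k, t, hkt, hk2, hk3, ht, hkge, h8k⟩ :=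
          decomp (show 0 < m + 6 by omega) (show 4 ∣ m + 6 by omega)
        have hk4 : 4 ∣ k := h8k (by omega)
        obtain ⟨s, rfl⟩ : ∃ s, t = s + 1 := ⟨t - 1, by obtain ⟨w, hw⟩ := ht; omega⟩
        have hc1 := congL_even hk2 (t := s) (by simpa using (Nat.Odd.sub_odd ht odd_one)) (2*k - 6)
        rw [show 2*k*(s+1) = 2*k*s + 2*k from by ring] at hkt
        rw [show 2*k - 6 + 2*k*s = m from by omega] at hc1
        have hc2 := BL6 hk2 (by omega)
        have hc : Lz k ∣ Lz m + 18 := by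
          have := dvd_add hc1 hc2
          rwa [show Lz m - Lz (2*k-6) + (Lz (2*k-6) + 18) = Lz m + 18 from by ring] at this
        rw [hLz] at hc
        exact fin9 hk4 hk3 hc
  · -- m odd: L m ≡ 4 (mod 8), impossible
    exfalso
    have hm2 : ¬ 2 ∣ m := by rw [Nat.two_dvd_ne_zero, Nat.odd_iff.1 ho]
    have h8 := Ln_4mod8 hm2 h3m
    rcases sq_mod8 b with hb | hb | hb <;> omega

/-- Even index case. -/
lemma even_sq_fib {m y : ℕ} (hy : fib (2*m) = y^2) :
    fib (2*m) = 0 ∨ fib (2*m) = 1 ∨ fib (2*m) = 144 := by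
  by_cases hm0 : m = 0
  · subst hm0; left; rfl
  have hprod : fib m * Ln m = y^2 := by rw [← fib_two_mul_Ln]; exact hy
  have hgcd := gcd_fib_Ln_dvd_two m
  by_cases h3m : 3 ∣ m
  · -- gcd = 2 case
    have hfe : 2 ∣ fib m := by simpa [show fib 3 = 2 from rfl] using Nat.fib_dvd 3 m h3m
    have hle : 2 ∣ Ln m := Ln_even_of_3dvd h3m
    obtain ⟨f, hf⟩ := hfe
    obtain ⟨l, hl⟩ := hle
    have h4 : y^2 = 4*(f*l) := by rw [← hprod, hf, hl]; ring
    have hy2 : 2 ∣ y := Nat.Prime.dvd_of_dvd_pow Nat.prime_two ⟨2*(f*l), by rw [h4]; ring⟩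
    obtain ⟨z, hz⟩ := hy2
    have hz4 : y^2 = 4*z^2 := by rw [hz]; ring
    have h5 : f * l = z^2 := by omega
    have hzfl : l * f = z^2 := by rw [mul_comm]; exact h5
    have hgfl : Nat.gcd l f = 1 := by
      have hmul : Nat.gcd (2*f) (2*l) = 2 * Nat.gcd f l := Nat.gcd_mul_left 2 f l
      rw [hf, hl, hmul] at hgcd
      have h6 : 2 * Nat.gcd f l ∣ 2 * 1 := by simpa using hgcd
      have h7 : Nat.gcd f l ∣ 1 := (Nat.mul_dvd_mul_iff_left (by norm_num : 0 < 2)).1 h6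
      rw [Nat.gcd_comm]
      exact Nat.dvd_one.1 h7
    obtain ⟨b, hb⟩ := exists_eq_pow_of_mul_eq_pow
      (by rw [gcd_eq_nat_gcd, hgfl]; exact isUnit_one) hzfl
    have : Ln m = 2*b^2 := by rw [hl, hb]
    rcases lucas_two_sq this with h | h
    · omega
    · subst h; right; right; rfl
  · -- gcd = 1 case
    have hodd := Ln_odd h3m
    have hg1 : Nat.gcd (Ln m) (fib m) = 1 := by
      have hcomm := Nat.gcd_comm (fib m) (Ln m)
      have hdl : Nat.gcd (fib m) (Ln m) ∣ Ln m := Nat.gcd_dvd_right _ _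
      rcases (Nat.dvd_prime Nat.prime_two).1 hgcd with h | h
      · omega
      · rw [h] at hdl; omega
    have hprod' : Ln m * fib m = y^2 := by rw [mul_comm]; exact hprod
    obtain ⟨b, hb⟩ := exists_eq_pow_of_mul_eq_pow
      (by rw [gcd_eq_nat_gcd, hg1]; exact isUnit_one) hprod'
    rcases lucas_sq hb with h | h
    · subst h; right; left; rfl
    · subst h; exact absurd (dvd_refl 3) h3m

/-- **Theorem.** A Fibonacci number is a perfect square iff it is `0`, `1`, or `144`. -/
theorem stmt10 (n : ℕ) :
    (∃ m : ℤ, (Nat.fib n : ℤ) = m ^ 2) ↔ Nat.fib n ∈ ({0, 1, 144} : Set ℕ) := by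
  simp only [Set.mem_insert_iff, Set.mem_singleton_iff]
  constructor
  · rintro ⟨m, hm⟩
    have hy : fib n = m.natAbs ^ 2 := by
      have h1 : ((fib n : ℤ)).natAbs = (m^2).natAbs := by rw [hm]
      simpa [Int.natAbs_pow] using h1
    rcases Nat.even_or_odd n with he | ho
    · obtain ⟨c, hc⟩ := he
      rw [show n = 2*c from by omega] at hy ⊢
      exact even_sq_fib hy
    · have h1 : n = 1 := odd_sq_fib (by rw [Nat.two_dvd_ne_zero, Nat.odd_iff.1 ho]) hy
      subst h1
      right; left; rfl
  · rintro (h | h | h) <;> rw [h]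
    · exact ⟨0, by norm_num⟩
    · exact ⟨1, by norm_num⟩
    · exact ⟨12, by norm_num⟩
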